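/- arXiv:2603.17925 — 2 statements merged into one kernel-verified Lean document; each statement's English description precedes it below -/
import Mathlib

section
/- Let X_1,…,X_n be i.i.d. real random variables with distribution Q and mean μ = E_Q[X_1], and suppose that for some b > 0, E_Q[exp(θ(X_1 − μ))] ≤ b for all θ ∈ [−1, 1]. Then for every ε > 0, P_Q( (1/n)·∑_{i=1}^n (X_i − μ) ≥ ε ) ≤ exp(−ε²n/(8b)) + exp(−εn/4). -/
open MeasureTheory ProbabilityTheory Filter
open scoped ENNReal

private lemma aux_sq16 (t : ℝ) (ht : 0 ≤ t) : t ^ 2 ≤ 16 * Real.exp (t / 2 - 2) := by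
  have h := Real.add_one_le_exp (t / 4 - 1)
  have e : Real.exp (t / 4 - 1) * Real.exp (t / 4 - 1) = Real.exp (t / 2 - 2) := by
    rw [← Real.exp_add]; ring_nf
  nlinarith [Real.exp_pos (t / 4 - 1)]

private lemma aux_sq4 (t : ℝ) (ht : 0 ≤ t) : t ^ 2 ≤ 4 * Real.exp (t - 2) := by
  have h := Real.add_one_le_exp (t / 2 - 1)
  have e : Real.exp (t / 2 - 1) * Real.exp (t / 2 - 1) = Real.exp (t - 2) := by
    rw [← Real.exp_add]; ring_nf
  nlinarith [Real.exp_pos (t / 2 - 1)]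

private lemma aux_exp_neg {x : ℝ} (hx : x ≤ 0) : Real.exp x ≤ 1 + x + x ^ 2 / 2 := by
  have hd : ∀ y : ℝ, HasDerivAt (fun z => 1 + z + z ^ 2 / 2 - Real.exp z)
      (1 + y - Real.exp y) y := by
    intro y
    have h1 : HasDerivAt (fun z : ℝ => z ^ 2 / 2) y y := by
      simpa using (hasDerivAt_pow 2 y).div_const 2
    exact (((hasDerivAt_id y).const_add (1 : ℝ)).add h1).sub (Real.hasDerivAt_exp y)
  have hmono : AntitoneOn (fun z => 1 + z + z ^ 2 / 2 - Real.exp z) (Set.Iic 0) := by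
    refine antitoneOn_of_deriv_nonpos (convex_Iic 0) (Continuous.continuousOn (by continuity)) ?_ ?_
    · intro y _; exact (hd y).differentiableAt.differentiableWithinAt
    · intro y _
      rw [(hd y).deriv]
      linarith [Real.add_one_le_exp y]
  have h0 := hmono (Set.mem_Iic.2 hx) (Set.mem_Iic.2 le_rfl) hx
  simp only [Real.exp_zero] at h0
  nlinarith [h0]

private lemma aux_one_sub_mul_exp {u : ℝ} (hu : u ≤ 0) :
    0 ≤ (1 - u) * Real.exp u - 1 + u ^ 2 / 2 := by
  have hd : ∀ y : ℝ, HasDerivAt (fun z => (1 - z) * Real.exp z - 1 + z ^ 2 / 2)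
      (y * (1 - Real.exp y)) y := by
    intro y
    have h1 : HasDerivAt (fun z : ℝ => z ^ 2 / 2) y y := by
      simpa using (hasDerivAt_pow 2 y).div_const 2
    have h2 := ((((hasDerivAt_const y (1 : ℝ)).sub (hasDerivAt_id y)).mul
      (Real.hasDerivAt_exp y)).sub_const 1).add h1
    exact h2.congr_deriv (by simp only [Pi.sub_apply, id_eq]; ring)
  have hmono : AntitoneOn (fun z => (1 - z) * Real.exp z - 1 + z ^ 2 / 2) (Set.Iic 0) := by
    refine antitoneOn_of_deriv_nonpos (convex_Iic 0) (Continuous.continuousOn (by continuity)) ?_ ?_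
    · intro y _; exact (hd y).differentiableAt.differentiableWithinAt
    · intro y hy
      rw [interior_Iic] at hy
      rw [(hd y).deriv]
      have h3 : Real.exp y ≤ 1 := Real.exp_le_one_iff.2 (le_of_lt hy)
      have h4 : y < 0 := hy
      nlinarith
  have h0 := hmono (Set.mem_Iic.2 hu) (Set.mem_Iic.2 le_rfl) hu
  simp only [Real.exp_zero] at h0
  nlinarith [h0]

private lemma aux_exp_pos_side {x : ℝ} (hx : 0 ≤ x) :
    Real.exp x ≤ 1 + x + x ^ 2 / 2 * Real.exp x := by
  have h := aux_one_sub_mul_exp (neg_nonpos.2 hx)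
  have hmul : Real.exp x * Real.exp (-x) = 1 := by
    rw [← Real.exp_add]; simp
  nlinarith [mul_nonneg (Real.exp_pos x).le h, Real.exp_pos x, Real.exp_pos (-x)]

private lemma aux_ptwise {θ : ℝ} (h0 : 0 ≤ θ) (h1 : θ ≤ 1 / 2) (y : ℝ) :
    Real.exp (θ * y) ≤
      1 + θ * y + θ ^ 2 * Real.exp (-2) * (8 * Real.exp y + 2 * Real.exp (-y)) := by
  rcases le_or_gt y 0 with hy | hy
  · have h := aux_exp_neg (mul_nonpos_of_nonneg_of_nonpos h0 hy)
    have hsq := aux_sq4 (-y) (by linarith)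
    have hsplit : Real.exp (-y - 2) = Real.exp (-y) * Real.exp (-2) := by
      rw [← Real.exp_add]; ring_nf
    rw [hsplit] at hsq
    have hmul := mul_le_mul_of_nonneg_left hsq (sq_nonneg θ)
    nlinarith [Real.exp_pos y, Real.exp_pos (-2), mul_pos (Real.exp_pos y) (Real.exp_pos (-2)),
      sq_nonneg θ, mul_nonneg (mul_nonneg (sq_nonneg θ) (Real.exp_pos y).le) (Real.exp_pos (-2)).le]
  · have h := aux_exp_pos_side (mul_nonneg h0 hy.le)
    have hexps : Real.exp (θ * y) ≤ Real.exp (y / 2) := Real.exp_le_exp.2 (by nlinarith)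
    have hsq := aux_sq16 y hy.le
    have key : (θ * y) ^ 2 / 2 * Real.exp (θ * y) ≤
        θ ^ 2 * Real.exp (-2) * (8 * Real.exp y) := by
      have e1 : Real.exp (y / 2 - 2) * Real.exp (y / 2) = Real.exp y * Real.exp (-2) := by
        rw [← Real.exp_add, ← Real.exp_add]; ring_nf
      calc (θ * y) ^ 2 / 2 * Real.exp (θ * y) ≤ (θ * y) ^ 2 / 2 * Real.exp (y / 2) := by
            have := mul_le_mul_of_nonneg_left hexps (by positivity : (0:ℝ) ≤ (θ * y) ^ 2 / 2)
            linarith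
        _ = θ ^ 2 / 2 * (y ^ 2 * Real.exp (y / 2)) := by ring
        _ ≤ θ ^ 2 / 2 * (16 * Real.exp (y / 2 - 2) * Real.exp (y / 2)) := by
            have h2 := mul_le_mul_of_nonneg_right hsq (Real.exp_pos (y / 2)).le
            have h3 := mul_le_mul_of_nonneg_left h2 (by positivity : (0:ℝ) ≤ θ ^ 2 / 2)
            calc θ ^ 2 / 2 * (y ^ 2 * Real.exp (y / 2))
                = θ ^ 2 / 2 * (y ^ 2 * Real.exp (y / 2)) := rfl
              _ ≤ θ ^ 2 / 2 * (16 * Real.exp (y / 2 - 2) * Real.exp (y / 2)) := by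
                  nlinarith [Real.exp_pos (y/2), sq_nonneg θ]
        _ = θ ^ 2 * Real.exp (-2) * (8 * Real.exp y) := by
            rw [mul_assoc (16:ℝ), e1]; ring
    nlinarith [key, h, mul_nonneg (mul_nonneg (sq_nonneg θ) (Real.exp_pos (-2)).le)
      (Real.exp_pos (-y)).le]

private lemma aux_integrable_exp_mul {Ω : Type*} {mΩ : MeasurableSpace Ω} {Q : Measure Ω}
    {Y : Ω → ℝ} (hYm : Measurable Y)
    (hpi : Integrable (fun ω => Real.exp (Y ω)) Q)
    (hmi : Integrable (fun ω => Real.exp (-Y ω)) Q)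
    {θ : ℝ} (h0 : 0 ≤ θ) (h1 : θ ≤ 1 / 2) :
    Integrable (fun ω => Real.exp (θ * Y ω)) Q := by
  refine Integrable.mono' (hpi.add hmi) ((hYm.const_mul θ).exp.aestronglyMeasurable) ?_
  filter_upwards with ω
  rw [Real.norm_eq_abs, abs_of_pos (Real.exp_pos _)]
  rcases le_or_gt (Y ω) 0 with hy | hy
  · have : θ * Y ω ≤ -Y ω := by nlinarith
    have h2 := Real.exp_le_exp.2 this
    have := Real.exp_pos (Y ω)
    simp only [Pi.add_apply]
    linarith
  · have : θ * Y ω ≤ Y ω := by nlinarith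
    have h2 := Real.exp_le_exp.2 this
    have := Real.exp_pos (-Y ω)
    simp only [Pi.add_apply]
    linarith

private lemma aux_mgf_bound {Ω : Type*} {mΩ : MeasurableSpace Ω} {Q : Measure Ω}
    [IsProbabilityMeasure Q] {Y : Ω → ℝ} (hYm : Measurable Y) (hYint : Integrable Y Q)
    (hEY : ∫ ω, Y ω ∂Q = 0) {b : ℝ} (hb : 0 < b)
    (hpi : Integrable (fun ω => Real.exp (Y ω)) Q)
    (hmi : Integrable (fun ω => Real.exp (-Y ω)) Q)
    (hp : ∫ ω, Real.exp (Y ω) ∂Q ≤ b) (hm : ∫ ω, Real.exp (-Y ω) ∂Q ≤ b)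
    {θ : ℝ} (h0 : 0 ≤ θ) (h1 : θ ≤ 1 / 2) :
    mgf Y Q θ ≤ Real.exp (2 * b * θ ^ 2) := by
  have hint1 := aux_integrable_exp_mul hYm hpi hmi h0 h1
  have hgint : Integrable (fun ω =>
      1 + θ * Y ω + θ ^ 2 * Real.exp (-2) * (8 * Real.exp (Y ω) + 2 * Real.exp (-Y ω))) Q := by
    exact ((integrable_const 1).add (hYint.const_mul θ)).add
      (((hpi.const_mul 8).add (hmi.const_mul 2)).const_mul _)
  have hle : mgf Y Q θ ≤ ∫ ω,
      (1 + θ * Y ω + θ ^ 2 * Real.exp (-2) * (8 * Real.exp (Y ω) + 2 * Real.exp (-Y ω))) ∂Q := by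
    refine integral_mono hint1 hgint ?_
    intro ω
    exact aux_ptwise h0 h1 (Y ω)
  have heq : ∫ ω, (1 + θ * Y ω + θ ^ 2 * Real.exp (-2) *
        (8 * Real.exp (Y ω) + 2 * Real.exp (-Y ω))) ∂Q =
      1 + θ * (∫ ω, Y ω ∂Q) + θ ^ 2 * Real.exp (-2) *
        (8 * ∫ ω, Real.exp (Y ω) ∂Q + 2 * ∫ ω, Real.exp (-Y ω) ∂Q) := by
    have hA : Integrable (fun ω => 1 + θ * Y ω) Q := (integrable_const 1).add (hYint.const_mul θ)
    have hB : Integrable (fun ω =>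
        θ ^ 2 * Real.exp (-2) * (8 * Real.exp (Y ω) + 2 * Real.exp (-Y ω))) Q :=
      ((hpi.const_mul 8).add (hmi.const_mul 2)).const_mul _
    have hC : Integrable (fun ω => θ * Y ω) Q := hYint.const_mul θ
    have hD : Integrable (fun ω => 8 * Real.exp (Y ω)) Q := hpi.const_mul 8
    have hE : Integrable (fun ω => 2 * Real.exp (-Y ω)) Q := hmi.const_mul 2
    rw [integral_add hA hB, integral_add (integrable_const 1) hC, integral_const,
      integral_const_mul, integral_const_mul, integral_add hD hE,
      integral_const_mul, integral_const_mul]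
    simp
  rw [heq, hEY] at hle
  have hexp2 : Real.exp (-2) * Real.exp 2 = 1 := by rw [← Real.exp_add]; norm_num
  have h5 : (5 : ℝ) ≤ Real.exp 2 := by
    have h := Real.exp_one_gt_d9
    have : Real.exp 2 = Real.exp 1 * Real.exp 1 := by rw [← Real.exp_add]; norm_num
    nlinarith
  have hbd : θ ^ 2 * Real.exp (-2) *
      (8 * ∫ ω, Real.exp (Y ω) ∂Q + 2 * ∫ ω, Real.exp (-Y ω) ∂Q) ≤ 2 * b * θ ^ 2 := by
    have hInn : (0:ℝ) < ∫ ω, Real.exp (Y ω) ∂Q := by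
      refine integral_pos_iff_support_of_nonneg (fun ω => (Real.exp_pos _).le) hpi |>.2 ?_
      · simp [Function.support, Real.exp_ne_zero]
    have hInn' : (0:ℝ) < ∫ ω, Real.exp (-Y ω) ∂Q := by
      refine integral_pos_iff_support_of_nonneg (fun ω => (Real.exp_pos _).le) hmi |>.2 ?_
      · simp [Function.support, Real.exp_ne_zero]
    have hsum : 8 * ∫ ω, Real.exp (Y ω) ∂Q + 2 * ∫ ω, Real.exp (-Y ω) ∂Q ≤ 10 * b := by
      linarith
    have hee : Real.exp (-2) ≤ 1 / 5 := by
      have := Real.exp_pos (-2)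
      nlinarith
    have hmain := mul_le_mul_of_nonneg_left hsum
      (mul_nonneg (sq_nonneg θ) (Real.exp_pos (-2)).le)
    have h6 := mul_le_mul_of_nonneg_left hee (by positivity : (0:ℝ) ≤ 10 * b * θ ^ 2)
    nlinarith [hmain, h6]
  have : mgf Y Q θ ≤ 1 + 2 * b * θ ^ 2 := by
    simp only [mul_zero, add_zero] at hle
    linarith
  calc mgf Y Q θ ≤ 1 + 2 * b * θ ^ 2 := this
    _ ≤ Real.exp (2 * b * θ ^ 2) := by linarith [Real.add_one_le_exp (2 * b * θ ^ 2)]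

/-- Concentration for i.i.d. random variables with uniformly bounded MGF on `[-1,1]`:
if `E_Q[exp (θ (X 1 - μ))] ≤ b` for all `θ ∈ [-1,1]`, then for every `ε > 0`,
`Q((1/n) ∑_{i=1}^n (X i - μ) ≥ ε) ≤ exp (-ε² n / (8b)) + exp (-ε n / 4)`. -/
theorem stmt15
    {Ω : Type*} {mΩ : MeasurableSpace Ω} (Q : Measure Ω) [IsProbabilityMeasure Q]
    (n : ℕ) (hn : 1 ≤ n)
    (X : ℕ → Ω → ℝ) (hXmeas : ∀ i, Measurable (X i))
    (hindep : iIndepFun (fun i : Fin n => X (i + 1)) Q)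
    (hident : ∀ i ∈ Finset.Icc 1 n, IdentDistrib (X i) (X 1) Q Q)
    (μ : ℝ) (hint : Integrable (X 1) Q) (hμ : μ = ∫ ω, X 1 ω ∂Q)
    (b : ℝ) (hb : 0 < b)
    (hmgf : ∀ θ ∈ Set.Icc (-1 : ℝ) 1,
      ∫⁻ ω, ENNReal.ofReal (Real.exp (θ * (X 1 ω - μ))) ∂Q ≤ ENNReal.ofReal b) :
    ∀ ε : ℝ, 0 < ε →
      Q {ω | ε ≤ (1 / (n : ℝ)) * ∑ i ∈ Finset.Icc 1 n, (X i ω - μ)} ≤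
        ENNReal.ofReal
          (Real.exp (-(ε ^ 2 * n) / (8 * b)) + Real.exp (-(ε * n) / 4)) := by
  intro ε hε
  have hYm : Measurable (fun ω => X 1 ω - μ) := (hXmeas 1).sub measurable_const
  have hYint : Integrable (fun ω => X 1 ω - μ) Q := hint.sub (integrable_const μ)
  have hEY : ∫ ω, (X 1 ω - μ) ∂Q = 0 := by
    rw [integral_sub hint (integrable_const μ), integral_const, probReal_univ]
    simp [hμ]
  have hpi : Integrable (fun ω => Real.exp (X 1 ω - μ)) Q := by
    refine ⟨hYm.exp.aestronglyMeasurable, ?_⟩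
    rw [hasFiniteIntegral_iff_ofReal (ae_of_all _ fun ω => (Real.exp_pos _).le)]
    have h := hmgf 1 ⟨by norm_num, le_rfl⟩
    simp only [one_mul] at h
    exact lt_of_le_of_lt h ENNReal.ofReal_lt_top
  have hmi : Integrable (fun ω => Real.exp (-(X 1 ω - μ))) Q := by
    refine ⟨(hYm.neg).exp.aestronglyMeasurable, ?_⟩
    rw [hasFiniteIntegral_iff_ofReal (ae_of_all _ fun ω => (Real.exp_pos _).le)]
    have h := hmgf (-1) ⟨le_rfl, by norm_num⟩
    simp only [neg_one_mul] at h
    exact lt_of_le_of_lt h ENNReal.ofReal_lt_top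
  have hp : ∫ ω, Real.exp (X 1 ω - μ) ∂Q ≤ b := by
    have h := ofReal_integral_eq_lintegral_ofReal hpi (ae_of_all _ fun ω => (Real.exp_pos _).le)
    have h2 := hmgf 1 ⟨by norm_num, le_rfl⟩
    simp only [one_mul] at h2
    rw [← h] at h2
    exact (ENNReal.ofReal_le_ofReal_iff hb.le).1 h2
  have hm : ∫ ω, Real.exp (-(X 1 ω - μ)) ∂Q ≤ b := by
    have h := ofReal_integral_eq_lintegral_ofReal hmi (ae_of_all _ fun ω => (Real.exp_pos _).le)
    have h2 := hmgf (-1) ⟨le_rfl, by norm_num⟩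
    simp only [neg_one_mul] at h2
    rw [← h] at h2
    exact (ENNReal.ofReal_le_ofReal_iff hb.le).1 h2
  have hmgfY : ∀ θ : ℝ, 0 ≤ θ → θ ≤ 1 / 2 →
      mgf (fun ω => X 1 ω - μ) Q θ ≤ Real.exp (2 * b * θ ^ 2) :=
    fun θ h0 h1 => aux_mgf_bound hYm hYint hEY hb hpi hmi hp hm h0 h1
  set Z : Fin n → Ω → ℝ := fun i ω => X (↑i + 1) ω - μ with hZdef
  have hZm : ∀ i : Fin n, Measurable (Z i) := fun i => (hXmeas _).sub measurable_const
  have hZindep : iIndepFun Z Q :=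
    hindep.comp (fun _ => fun v : ℝ => v - μ) (fun _ => measurable_id.sub measurable_const)
  have hZident : ∀ i : Fin n, IdentDistrib (Z i) (fun ω => X 1 ω - μ) Q Q := by
    intro i
    have hmem : (↑i + 1 : ℕ) ∈ Finset.Icc 1 n :=
      Finset.mem_Icc.2 ⟨Nat.le_add_left 1 _, Nat.succ_le_of_lt i.isLt⟩
    exact (hident _ hmem).comp (measurable_id.sub measurable_const)
  have hn0 : (0 : ℝ) < n := by
    have : (1:ℝ) ≤ (n:ℝ) := by exact_mod_cast hn
    linarith
  have hreindex : ∀ ω, (∑ i : Fin n, Z i) ω = ∑ i ∈ Finset.Icc 1 n, (X i ω - μ) := by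
    intro ω
    rw [Finset.sum_apply]
    rw [show (∑ i : Fin n, Z i ω) = ∑ i : Fin n, (X (↑i + 1) ω - μ) from rfl]
    rw [Fin.sum_univ_eq_sum_range (fun k => X (k + 1) ω - μ) n, ← Finset.Ico_add_one_right_eq_Icc,
      Finset.sum_Ico_eq_sum_range]
    exact (Finset.sum_congr rfl fun i _ => by rw [add_comm 1 i]).symm
  have hsetEq : {ω | ε ≤ (1 / (n : ℝ)) * ∑ i ∈ Finset.Icc 1 n, (X i ω - μ)} =
      {ω | (n : ℝ) * ε ≤ (∑ i : Fin n, Z i) ω} := by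
    ext ω
    simp only [Set.mem_setOf_eq]
    rw [hreindex ω]
    rw [show (1 / (n : ℝ)) * (∑ i ∈ Finset.Icc 1 n, (X i ω - μ)) =
      (∑ i ∈ Finset.Icc 1 n, (X i ω - μ)) / n from by ring, le_div_iff₀ hn0]
    constructor <;> intro h <;> linarith
  have hkey : ∀ θ : ℝ, 0 ≤ θ → θ ≤ 1 / 2 →
      (Q {ω | (n : ℝ) * ε ≤ (∑ i : Fin n, Z i) ω}).toReal ≤
        Real.exp (2 * b * θ ^ 2 * n - θ * ((n : ℝ) * ε)) := by
    intro θ h0 h1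
    have hu : Measurable (fun v : ℝ => Real.exp (θ * v)) := (measurable_id.const_mul θ).exp
    have hintθ : Integrable (fun ω => Real.exp (θ * (X 1 ω - μ))) Q :=
      aux_integrable_exp_mul hYm hpi hmi h0 h1
    have hintZ : ∀ i : Fin n, Integrable (fun ω => Real.exp (θ * Z i ω)) Q := fun i =>
      ((hZident i).comp hu).integrable_iff.mpr hintθ
    have hSint : Integrable (fun ω => Real.exp (θ * (∑ i : Fin n, Z i) ω)) Q :=
      hZindep.integrable_exp_mul_sum hZm (fun i _ => hintZ i)
    have h := measure_ge_le_exp_mul_mgf (X := ∑ i : Fin n, Z i) (μ := Q)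
      ((n : ℝ) * ε) h0 hSint
    rw [hZindep.mgf_sum hZm Finset.univ] at h
    have hprodeq : ∀ i : Fin n, mgf (Z i) Q θ = mgf (fun ω => X 1 ω - μ) Q θ := by
      intro i
      simp only [mgf]
      exact ((hZident i).comp hu).integral_eq
    rw [Finset.prod_congr rfl (fun i _ => hprodeq i), Finset.prod_const, Finset.card_univ,
      Fintype.card_fin] at h
    have hpow : (mgf (fun ω => X 1 ω - μ) Q θ) ^ n ≤ Real.exp (2 * b * θ ^ 2) ^ n :=
      pow_le_pow_left₀ mgf_nonneg (hmgfY θ h0 h1) n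
    calc (Q {ω | (n : ℝ) * ε ≤ (∑ i : Fin n, Z i) ω}).toReal
        ≤ Real.exp (-θ * ((n : ℝ) * ε)) * (mgf (fun ω => X 1 ω - μ) Q θ) ^ n := h
      _ ≤ Real.exp (-θ * ((n : ℝ) * ε)) * Real.exp (2 * b * θ ^ 2) ^ n :=
          mul_le_mul_of_nonneg_left hpow (Real.exp_pos _).le
      _ = Real.exp (2 * b * θ ^ 2 * n - θ * ((n : ℝ) * ε)) := by
          rw [← Real.exp_nat_mul, ← Real.exp_add]
          ring_nf
  rw [hsetEq, ← ENNReal.ofReal_toReal (measure_ne_top Q _)]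
  apply ENNReal.ofReal_le_ofReal
  rcases le_or_gt ε (2 * b) with hcb | hcb
  · have h0 : 0 ≤ ε / (4 * b) := by positivity
    have h1 : ε / (4 * b) ≤ 1 / 2 := by
      rw [div_le_iff₀ (by linarith : (0:ℝ) < 4 * b)]
      linarith
    have h := hkey _ h0 h1
    have hbne : b ≠ 0 := ne_of_gt hb
    have heqexp : 2 * b * (ε / (4 * b)) ^ 2 * n - (ε / (4 * b)) * ((n : ℝ) * ε) =
        -(ε ^ 2 * n) / (8 * b) := by
      field_simp
      ring
    rw [heqexp] at h
    linarith [Real.exp_pos (-(ε * n) / 4)]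
  · have h := hkey (1 / 2) (by norm_num) le_rfl
    have hn1 : (1:ℝ) ≤ (n:ℝ) := by exact_mod_cast hn
    have hle2 : Real.exp (2 * b * (1 / 2 : ℝ) ^ 2 * n - (1 / 2) * ((n : ℝ) * ε)) ≤
        Real.exp (-(ε * n) / 4) := by
      apply Real.exp_le_exp.2
      have hprod : 0 ≤ (n : ℝ) * (ε - 2 * b) := mul_nonneg (by linarith) (by linarith)
      nlinarith
    linarith [Real.exp_pos (-(ε ^ 2 * n) / (8 * b))]
end

section
/- Let X_1,…,X_n be i.i.d. real random variables with distribution Q and mean μ, and suppose that for some b > 0, E_Q[exp(θ(X_1 − μ))] ≤ b for all θ ∈ [−1, 1]. Then (1) for every θ ∈ [0, 1/2], E_Q[exp(θ(X_1 − μ))] ≤ exp(2bθ²), and (2) for every α ∈ (0,1), P_Q( (1/n)·∑_{i=1}^n (X_i − μ) ≥ √(8b·log(1/α)/n) + 4·log(1/α)/n ) ≤ α. -/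
open scoped Nat

lemma my_exp_tsum (x : ℝ) : Real.exp x = ∑' n : ℕ, x ^ n / n ! := by
  rw [Real.exp_eq_exp_ℝ, NormedSpace.exp_eq_tsum_div]

lemma my_exp_tail (x : ℝ) :
    Real.exp x = 1 + x + ∑' n : ℕ, x ^ (n + 2) / (n + 2)! := by
  have h := Real.summable_pow_div_factorial x
  have h1 : Summable (fun n : ℕ => x ^ (n + 1) / (n + 1)!) :=
    (summable_nat_add_iff 1).mpr h
  rw [my_exp_tsum, Summable.tsum_eq_zero_add h, Summable.tsum_eq_zero_add h1]
  simp [Nat.factorial]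
  ring

set_option maxHeartbeats 1000000 in
lemma my_exp_mul_le {θ : ℝ} (h0 : 0 ≤ θ) (h1 : θ ≤ 1) (y : ℝ) :
    Real.exp (θ * y) ≤ 1 + θ * y + θ ^ 2 * (Real.exp y + Real.exp (-y)) := by
  have hsum1 : Summable (fun n : ℕ => (θ * y) ^ (n + 2) / (n + 2)!) :=
    (summable_nat_add_iff 2).mpr (Real.summable_pow_div_factorial _)
  have hsum2 : Summable (fun n : ℕ => |y| ^ (n + 2) / (n + 2)!) :=
    (summable_nat_add_iff 2).mpr (Real.summable_pow_div_factorial _)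
  have key : ∑' n : ℕ, (θ * y) ^ (n + 2) / (n + 2)! ≤
      θ ^ 2 * ∑' n : ℕ, |y| ^ (n + 2) / (n + 2)! := by
    rw [← tsum_mul_left]
    refine Summable.tsum_le_tsum (fun n => ?_) hsum1 (hsum2.mul_left _)
    have hle : (θ * y) ^ (n + 2) ≤ |θ * y| ^ (n + 2) := by
      calc (θ * y) ^ (n + 2) ≤ |(θ * y) ^ (n + 2)| := le_abs_self _
      _ = |θ * y| ^ (n + 2) := abs_pow _ _
    have h2 : |θ * y| ^ (n + 2) = θ ^ (n + 2) * |y| ^ (n + 2) := by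
      rw [abs_mul, mul_pow, abs_of_nonneg h0]
    have h3 : θ ^ (n + 2) ≤ θ ^ 2 := pow_le_pow_of_le_one h0 h1 (by omega)
    have h4 : (0:ℝ) < (n + 2)! := by positivity
    rw [← mul_div_assoc]
    rw [div_le_div_iff₀ h4 h4]
    have h5 : (θ * y) ^ (n + 2) ≤ θ ^ 2 * |y| ^ (n + 2) := by
      refine hle.trans ?_
      rw [h2]
      exact mul_le_mul_of_nonneg_right h3 (pow_nonneg (abs_nonneg y) _)
    exact mul_le_mul_of_nonneg_right h5 h4.le
  have habs : Real.exp |y| ≤ Real.exp y + Real.exp (-y) := by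
    rcases abs_cases y with ⟨h, _⟩ | ⟨h, _⟩ <;> rw [h] <;>
      nlinarith [Real.exp_pos y, Real.exp_pos (-y)]
  have htail : θ ^ 2 * ∑' n : ℕ, |y| ^ (n + 2) / (n + 2)! ≤
      θ ^ 2 * (Real.exp y + Real.exp (-y)) := by
    have := my_exp_tail |y|
    have h5 : ∑' n : ℕ, |y| ^ (n + 2) / (n + 2)! = Real.exp |y| - 1 - |y| := by linarith
    rw [h5]
    have := abs_nonneg y
    nlinarith [sq_nonneg θ]
  have := my_exp_tail (θ * y)
  linarith


lemma my_numeric {b L N : ℝ} (hb : 0 < b) (hL : 0 < L) (hN : 1 ≤ N) :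
    N * (2 * b * (min (1/2) (Real.sqrt (L / (2*b*N)))) ^ 2)
      - (min (1/2) (Real.sqrt (L / (2*b*N)))) * (N * (Real.sqrt (8*b*L/N) + 4*L/N)) ≤ -L := by
  have hN0 : 0 < N := lt_of_lt_of_le one_pos hN
  set s := Real.sqrt (L / (2*b*N)) with hs
  set R := Real.sqrt (8*b*L/N) with hR
  have hs0 : 0 ≤ s := Real.sqrt_nonneg _
  have hs2 : s ^ 2 = L / (2*b*N) := Real.sq_sqrt (by positivity)
  have hR0 : 0 ≤ R := Real.sqrt_nonneg _
  rcases le_or_gt s (1/2) with h | h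
  · rw [min_eq_right h]
    have key : s * R = 2*L/N := by
      rw [hs, hR, ← Real.sqrt_mul (by positivity)]
      have he : L / (2*b*N) * (8*b*L/N) = (2*L/N)^2 := by field_simp; ring
      rw [he, Real.sqrt_sq (by positivity)]
    have h1 : N * (2*b*s^2) = L := by rw [hs2]; field_simp
    have h2 : s * (N * (R + 4*L/N)) = 2*L + 4*L*s := by
      have h3 : s * (N * (R + 4*L/N)) = N * (s*R) + 4*L*s := by field_simp
      rw [h3, key]
      field_simp
    rw [h1, h2]
    nlinarith [mul_nonneg hL.le hs0]
  · rw [min_eq_left h.le]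
    have hq : 1/4 < L / (2*b*N) := by nlinarith [hs2]
    have hbn : b*N < 2*L := by
      rw [lt_div_iff₀ (by positivity)] at hq
      linarith
    have hE : (1/2) * (N * (R + 4*L/N)) = N*R/2 + 2*L := by field_simp; ring
    rw [hE]
    nlinarith [mul_nonneg hN0.le hR0]
open MeasureTheory ProbabilityTheory Filter
open scoped ENNReal

/-- Root-`n` confidence intervals under finite MGFs: if `E_Q[exp (θ (X 1 - μ))] ≤ b` for
all `θ ∈ [-1,1]`, then (1) `E_Q[exp (θ (X 1 - μ))] ≤ exp (2bθ²)` for all `θ ∈ [0,1/2]`,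
and (2) for every `α ∈ (0,1)`,
`Q((1/n) ∑_{i=1}^n (X i - μ) ≥ √(8b log(1/α)/n) + 4 log(1/α)/n) ≤ α`. -/
theorem stmt16
    {Ω : Type*} {mΩ : MeasurableSpace Ω} (Q : Measure Ω) [IsProbabilityMeasure Q]
    (n : ℕ) (hn : 1 ≤ n)
    (X : ℕ → Ω → ℝ) (hXmeas : ∀ i, Measurable (X i))
    (hindep : iIndepFun (fun i : Fin n => X (i + 1)) Q)
    (hident : ∀ i ∈ Finset.Icc 1 n, IdentDistrib (X i) (X 1) Q Q)
    (μ : ℝ) (hint : Integrable (X 1) Q) (hμ : μ = ∫ ω, X 1 ω ∂Q)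
    (b : ℝ) (hb : 0 < b)
    (hmgf : ∀ θ ∈ Set.Icc (-1 : ℝ) 1,
      ∫⁻ ω, ENNReal.ofReal (Real.exp (θ * (X 1 ω - μ))) ∂Q ≤ ENNReal.ofReal b) :
    (∀ θ ∈ Set.Icc (0 : ℝ) (1 / 2),
      ∫⁻ ω, ENNReal.ofReal (Real.exp (θ * (X 1 ω - μ))) ∂Q ≤
        ENNReal.ofReal (Real.exp (2 * b * θ ^ 2))) ∧
    (∀ α ∈ Set.Ioo (0 : ℝ) 1,
      Q {ω | Real.sqrt (8 * b * Real.log (1 / α) / n) + 4 * Real.log (1 / α) / n ≤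
          (1 / (n : ℝ)) * ∑ i ∈ Finset.Icc 1 n, (X i ω - μ)} ≤ ENNReal.ofReal α) := by
  have hYmeas : Measurable (fun ω => X 1 ω - μ) := (hXmeas 1).sub measurable_const
  -- integrability of exp (c * Y) for c ∈ [-1,1]
  have hintc : ∀ c ∈ Set.Icc (-1:ℝ) 1, Integrable (fun ω => Real.exp (c * (X 1 ω - μ))) Q := by
    intro c hc
    refine ⟨((hYmeas.const_mul c).exp).aestronglyMeasurable, ?_⟩
    rw [hasFiniteIntegral_iff_ofReal (ae_of_all _ fun ω => (Real.exp_pos _).le)]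
    exact lt_of_le_of_lt (hmgf c hc) ENNReal.ofReal_lt_top
  have hIc : ∀ c ∈ Set.Icc (-1:ℝ) 1, ∫ ω, Real.exp (c * (X 1 ω - μ)) ∂Q ≤ b := by
    intro c hc
    have h1 : ENNReal.ofReal (∫ ω, Real.exp (c * (X 1 ω - μ)) ∂Q)
        = ∫⁻ ω, ENNReal.ofReal (Real.exp (c * (X 1 ω - μ))) ∂Q :=
      ofReal_integral_eq_lintegral_ofReal (hintc c hc) (ae_of_all _ fun ω => (Real.exp_pos _).le)
    exact (ENNReal.ofReal_le_ofReal_iff hb.le).mp (h1 ▸ hmgf c hc)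
  -- Y has mean zero
  have hYint : Integrable (fun ω => X 1 ω - μ) Q := hint.sub (integrable_const μ)
  have hYmean : ∫ ω, (X 1 ω - μ) ∂Q = 0 := by
    rw [integral_sub hint (integrable_const μ), integral_const, probReal_univ]
    simp [hμ]
  -- the function g
  have hgint : Integrable (fun ω => Real.exp (X 1 ω - μ) + Real.exp (-(X 1 ω - μ))) Q := by
    have h1 := hintc 1 (by norm_num)
    have h2 := hintc (-1) (by norm_num)
    simp only [one_mul, neg_one_mul] at h1 h2
    exact h1.add h2
  have hgI : ∫ ω, (Real.exp (X 1 ω - μ) + Real.exp (-(X 1 ω - μ))) ∂Q ≤ 2 * b := by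
    rw [integral_add]
    · have h1 := hIc 1 (by norm_num)
      have h2 := hIc (-1) (by norm_num)
      simp only [one_mul, neg_one_mul] at h1 h2
      linarith
    · have h1 := hintc 1 (by norm_num); simpa using h1
    · have h2 := hintc (-1) (by norm_num); simpa using h2
  -- key real mgf bound
  have hmgfY : ∀ θ : ℝ, 0 ≤ θ → θ ≤ 1 →
      Integrable (fun ω => Real.exp (θ * (X 1 ω - μ))) Q ∧
      ∫ ω, Real.exp (θ * (X 1 ω - μ)) ∂Q ≤ 1 + 2 * b * θ ^ 2 := by
    intro θ h0 h1
    have hb1 : Integrable (fun ω => 1 + θ * (X 1 ω - μ)) Q := by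
      exact (integrable_const 1).add (hYint.const_mul θ)
    have hbd : Integrable (fun ω => 1 + θ * (X 1 ω - μ)
        + θ ^ 2 * (Real.exp (X 1 ω - μ) + Real.exp (-(X 1 ω - μ)))) Q := by
      exact hb1.add (hgint.const_mul (θ^2))
    have hptw : ∀ ω, Real.exp (θ * (X 1 ω - μ)) ≤ 1 + θ * (X 1 ω - μ)
        + θ ^ 2 * (Real.exp (X 1 ω - μ) + Real.exp (-(X 1 ω - μ))) :=
      fun ω => my_exp_mul_le h0 h1 (X 1 ω - μ)
    have hintθ : Integrable (fun ω => Real.exp (θ * (X 1 ω - μ))) Q := by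
      refine hbd.mono' ((hYmeas.const_mul θ).exp).aestronglyMeasurable
        (ae_of_all _ fun ω => ?_)
      rw [Real.norm_of_nonneg (Real.exp_pos _).le]
      exact hptw ω
    refine ⟨hintθ, ?_⟩
    calc ∫ ω, Real.exp (θ * (X 1 ω - μ)) ∂Q
        ≤ ∫ ω, (1 + θ * (X 1 ω - μ)
            + θ ^ 2 * (Real.exp (X 1 ω - μ) + Real.exp (-(X 1 ω - μ)))) ∂Q :=
          integral_mono hintθ hbd hptw
      _ = 1 + θ * ∫ ω, (X 1 ω - μ) ∂Q
            + θ ^ 2 * ∫ ω, (Real.exp (X 1 ω - μ) + Real.exp (-(X 1 ω - μ))) ∂Q := by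
          rw [integral_add hb1 (hgint.const_mul _),
            integral_add (integrable_const 1) (hYint.const_mul θ),
            integral_const, probReal_univ, integral_const_mul, integral_const_mul]
          simp
      _ ≤ 1 + 2 * b * θ ^ 2 := by
          rw [hYmean]
          have hθ2 : (0:ℝ) ≤ θ ^ 2 := sq_nonneg θ
          nlinarith
  constructor
  · intro θ hθ
    obtain ⟨hθ0, hθh⟩ := hθ
    have hθ1 : θ ≤ 1 := hθh.trans (by norm_num)
    obtain ⟨hintθ, hiθ⟩ := hmgfY θ hθ0 hθ1
    rw [← ofReal_integral_eq_lintegral_ofReal hintθ (ae_of_all _ fun ω => (Real.exp_pos _).le)]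
    apply ENNReal.ofReal_le_ofReal
    refine hiθ.trans ?_
    have := Real.add_one_le_exp (2 * b * θ ^ 2)
    linarith
  · intro α hα
    obtain ⟨hα0, hα1⟩ := hα
    set L := Real.log (1 / α) with hLdef
    have hL0 : 0 < L := Real.log_pos (by rw [lt_div_iff₀ hα0]; linarith)
    have hN0 : (0:ℝ) < n := by exact_mod_cast Nat.pos_of_ne_zero (by omega)
    have hN1 : (1:ℝ) ≤ n := by exact_mod_cast hn
    set θ := min (1/2 : ℝ) (Real.sqrt (L / (2*b*n))) with hθdef
    have hθ0 : 0 ≤ θ := le_min (by norm_num) (Real.sqrt_nonneg _)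
    have hθh : θ ≤ 1/2 := min_le_left _ _
    have hθ1 : θ ≤ 1 := hθh.trans (by norm_num)
    obtain ⟨hintθ, hiθ⟩ := hmgfY θ hθ0 hθ1
    set Z : Fin n → Ω → ℝ := fun i ω => X (i + 1) ω - μ with hZdef
    have hZmeas : ∀ i, Measurable (Z i) := fun i => (hXmeas _).sub measurable_const
    have hindepZ : iIndepFun Z Q :=
      hindep.comp (fun _ x => x - μ) (fun _ => measurable_id.sub measurable_const)
    have hidZ : ∀ i : Fin n, IdentDistrib (Z i) (fun ω => X 1 ω - μ) Q Q := by
      intro i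
      have hmem : (i : ℕ) + 1 ∈ Finset.Icc 1 n := by
        simp [Finset.mem_Icc]
      exact (hident _ hmem).comp (measurable_id.sub measurable_const)
    have hidExp : ∀ i : Fin n, IdentDistrib (fun ω => Real.exp (θ * Z i ω))
        (fun ω => Real.exp (θ * (X 1 ω - μ))) Q Q :=
      fun i => (hidZ i).comp ((measurable_id.const_mul θ).exp)
    have hZint : ∀ i : Fin n, Integrable (fun ω => Real.exp (θ * Z i ω)) Q :=
      fun i => (hidExp i).integrable_iff.mpr hintθ
    have hZmgf : ∀ i : Fin n, mgf (Z i) Q θ = ∫ ω, Real.exp (θ * (X 1 ω - μ)) ∂Q :=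
      fun i => (hidExp i).integral_eq
    -- sum reindexing
    have hsum : ∀ ω, ∑ i ∈ Finset.Icc 1 n, (X i ω - μ) = (∑ i, Z i) ω := by
      intro ω
      rw [← Finset.Ico_add_one_right_eq_Icc, Finset.sum_Ico_eq_sum_range]
      simp only [Finset.sum_apply, hZdef, Nat.add_sub_cancel]
      rw [Fin.sum_univ_eq_sum_range (fun i => X (i + 1) ω - μ)]
      exact Finset.sum_congr rfl (fun i _ => by rw [add_comm])
    set t0 := Real.sqrt (8 * b * L / n) + 4 * L / n with ht0
    have hset : {ω | t0 ≤ (1 / (n:ℝ)) * ∑ i ∈ Finset.Icc 1 n, (X i ω - μ)}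
        = {ω | (n:ℝ) * t0 ≤ (∑ i, Z i) ω} := by
      ext ω
      simp only [Set.mem_setOf_eq, ← hsum ω, one_div, ← div_eq_inv_mul]
      rw [le_div_iff₀ hN0, mul_comm]
    rw [hset]
    have hintS : Integrable (fun ω => Real.exp (θ * (∑ i, Z i) ω)) Q :=
      hindepZ.integrable_exp_mul_sum hZmeas (fun i _ => hZint i)
    have hcher := measure_ge_le_exp_mul_mgf (μ := Q) (X := ∑ i, Z i) ((n:ℝ) * t0) hθ0 hintS
    have hprod : mgf (∑ i, Z i) Q θ ≤ Real.exp (2 * b * θ ^ 2) ^ n := by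
      rw [hindepZ.mgf_sum hZmeas]
      calc ∏ i : Fin n, mgf (Z i) Q θ ≤ ∏ _i : Fin n, Real.exp (2 * b * θ ^ 2) := by
            refine Finset.prod_le_prod (fun i _ => mgf_nonneg) (fun i _ => ?_)
            rw [hZmgf i]
            refine hiθ.trans ?_
            have := Real.add_one_le_exp (2 * b * θ ^ 2)
            linarith
        _ = Real.exp (2 * b * θ ^ 2) ^ n := by
            rw [Finset.prod_const, Finset.card_univ, Fintype.card_fin]
    have hfinal : Real.exp (-θ * ((n:ℝ) * t0)) * Real.exp (2 * b * θ ^ 2) ^ n ≤ α := by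
      rw [← Real.exp_nat_mul, ← Real.exp_add]
      have hexp : -θ * ((n:ℝ) * t0) + (n:ℝ) * (2 * b * θ ^ 2) ≤ -L := by
        have h9 := my_numeric hb hL0 hN1
        rw [← hθdef, ← ht0] at h9
        linarith
      calc Real.exp (-θ * ((n:ℝ) * t0) + (n:ℝ) * (2 * b * θ ^ 2))
          ≤ Real.exp (-L) := Real.exp_le_exp.mpr hexp
        _ = α := by
            rw [hLdef, one_div, Real.log_inv, neg_neg, Real.exp_log hα0]
    have hQle : (Q {ω | (n:ℝ) * t0 ≤ (∑ i, Z i) ω}).toReal ≤ α := by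
      refine hcher.trans ?_
      refine le_trans (mul_le_mul_of_nonneg_left hprod (Real.exp_pos _).le) hfinal
    calc Q {ω | (n:ℝ) * t0 ≤ (∑ i, Z i) ω}
        = ENNReal.ofReal (Q {ω | (n:ℝ) * t0 ≤ (∑ i, Z i) ω}).toReal :=
          (ENNReal.ofReal_toReal (measure_ne_top _ _)).symm
      _ ≤ ENNReal.ofReal α := ENNReal.ofReal_le_ofReal hQle
end
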